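/- Let n > 2 and 0 ≤ m < 2. Then ∫₀^∞ (1 - (w/(1+w))^(n/2-1)) w^(-m/2) dw = Γ(m/2) Γ((n-m)/2) / ((1 - m/2) Γ(n/2 - 1)), where for m = 0 the right side is interpreted via the limit; in particular the integral is finite for 0 < m < 2. -/

import Mathlib

open MeasureTheory Real Set Filter

/-- Real beta integral on (0,1). -/
lemma beta01 {p q : ℝ} (hp : 0 < p) (hq : 0 < q) :
    ∫ x in (0:ℝ)..1, x ^ (p - 1) * (1 - x) ^ (q - 1) =
      Real.Gamma p * Real.Gamma q / Real.Gamma (p + q) := by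
  have h := Complex.Gamma_mul_Gamma_eq_betaIntegral (s := (p : ℂ)) (t := (q : ℂ))
    (by simpa using hp) (by simpa using hq)
  have hb : Complex.betaIntegral p q =
      ((∫ x in (0:ℝ)..1, x ^ (p - 1) * (1 - x) ^ (q - 1) : ℝ) : ℂ) := by
    rw [Complex.betaIntegral, ← intervalIntegral.integral_ofReal]
    refine intervalIntegral.integral_congr fun x hx => ?_
    rw [Set.uIcc_of_le (by norm_num : (0:ℝ) ≤ 1)] at hx
    have h1 : ((p : ℂ) - 1) = ((p - 1 : ℝ) : ℂ) := by push_cast; ring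
    have h2 : ((q : ℂ) - 1) = ((q - 1 : ℝ) : ℂ) := by push_cast; ring
    have h3 : (1 : ℂ) - (x : ℂ) = ((1 - x : ℝ) : ℂ) := by push_cast; ring
    rw [h1, h2, h3, ← Complex.ofReal_cpow hx.1, ← Complex.ofReal_cpow (by linarith [hx.2]),
      ← Complex.ofReal_mul]
  rw [hb, ← Complex.ofReal_add] at h
  rw [Complex.Gamma_ofReal, Complex.Gamma_ofReal, Complex.Gamma_ofReal,
    ← Complex.ofReal_mul, ← Complex.ofReal_mul] at h
  have h' := Complex.ofReal_inj.mp h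
  have hG : Real.Gamma (p + q) ≠ 0 := (Real.Gamma_pos_of_pos (by linarith)).ne'
  field_simp
  linarith [h']

lemma beta01_integrable {p q : ℝ} (hp : 0 < p) (hq : 0 < q) :
    IntegrableOn (fun x : ℝ => x ^ (p - 1) * (1 - x) ^ (q - 1)) (Ioo 0 1) := by
  have h := (Complex.betaIntegral_convergent (u := (p : ℂ)) (v := (q : ℂ))
    (by simpa using hp) (by simpa using hq)).1
  have h2 : IntegrableOn (fun x : ℝ => ((x : ℂ) ^ ((p : ℂ) - 1) * (1 - (x : ℂ)) ^ ((q : ℂ) - 1)).re)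
      (Ioo 0 1) := ((h.mono_set Ioo_subset_Ioc_self).re)
  refine h2.congr_fun (fun x hx => ?_) measurableSet_Ioo
  have h1 : ((p : ℂ) - 1) = ((p - 1 : ℝ) : ℂ) := by push_cast; ring
  have hh2 : ((q : ℂ) - 1) = ((q - 1 : ℝ) : ℂ) := by push_cast; ring
  have h3 : (1 : ℂ) - (x : ℂ) = ((1 - x : ℝ) : ℂ) := by push_cast; ring
  dsimp only
  rw [h1, hh2, h3, ← Complex.ofReal_cpow hx.1.le, ← Complex.ofReal_cpow (by linarith [hx.2]),
    ← Complex.ofReal_mul, Complex.ofReal_re]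

lemma phi_deriv {x : ℝ} (hx : x ∈ Ioo (0:ℝ) 1) :
    HasDerivWithinAt (fun x : ℝ => x / (1 - x)) (((1 - x) ^ 2)⁻¹) (Ioo 0 1) x := by
  have h1x : (1:ℝ) - x ≠ 0 := by have := hx.2; intro h; linarith [hx.2]
  have := (hasDerivAt_id x).div ((hasDerivAt_const x 1).sub (hasDerivAt_id x)) h1x
  convert this.hasDerivWithinAt using 1
  rfl
  rfl
  rfl
  simp only [Pi.sub_apply, id]
  field_simp
  ring

lemma phi_inj : Set.InjOn (fun x : ℝ => x / (1 - x)) (Ioo 0 1) := by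
  intro x hx y hy h
  have hx1 : (0:ℝ) < 1 - x := by linarith [hx.2]
  have hy1 : (0:ℝ) < 1 - y := by linarith [hy.2]
  rw [div_eq_div_iff hx1.ne' hy1.ne'] at h
  nlinarith [h]

lemma phi_image : (fun x : ℝ => x / (1 - x)) '' (Ioo 0 1) = Ioi 0 := by
  ext t
  constructor
  · rintro ⟨x, hx, rfl⟩
    exact div_pos hx.1 (by linarith [hx.2])
  · intro ht
    have ht0 : (0:ℝ) < t := ht
    refine ⟨t / (1 + t), ⟨div_pos ht0 (by linarith), ?_⟩, ?_⟩
    · rw [div_lt_one (by linarith)]; linarith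
    · show t / (1 + t) / (1 - t / (1 + t)) = t
      have h1 : (1:ℝ) - t / (1 + t) = 1 / (1 + t) := by field_simp; ring
      rw [h1]
      field_simp

/-- Beta integral on (0,∞). -/
lemma betaIoi {p q : ℝ} (hp : 0 < p) (hq : 0 < q) :
    IntegrableOn (fun t : ℝ => t ^ (p - 1) * (1 + t) ^ (-(p + q))) (Ioi 0) ∧
      ∫ t in Ioi (0:ℝ), t ^ (p - 1) * (1 + t) ^ (-(p + q)) =
        Real.Gamma p * Real.Gamma q / Real.Gamma (p + q) := by
  set g : ℝ → ℝ := fun t => t ^ (p - 1) * (1 + t) ^ (-(p + q)) with hg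
  have key : ∀ x ∈ Ioo (0:ℝ) 1,
      |((1 - x) ^ 2)⁻¹| • g (x / (1 - x)) = x ^ (p - 1) * (1 - x) ^ (q - 1) := by
    intro x hx
    have hx0 : 0 < x := hx.1
    have hx1 : (0:ℝ) < 1 - x := by linarith [hx.2]
    have h1 : (1:ℝ) + x / (1 - x) = (1 - x)⁻¹ := by field_simp; ring
    have h2 : (x / (1 - x)) ^ (p - 1) = x ^ (p - 1) * ((1 - x) ^ (p - 1))⁻¹ := by
      rw [Real.div_rpow hx0.le hx1.le, div_eq_mul_inv]
    have h3 : ((1 - x)⁻¹) ^ (-(p + q)) = (1 - x) ^ (p + q) := by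
      rw [Real.inv_rpow hx1.le, Real.rpow_neg hx1.le, inv_inv]
    have hgval : g (x / (1 - x)) = x ^ (p - 1) * (1 - x) ^ (q + 1) := by
      show (x / (1 - x)) ^ (p - 1) * (1 + x / (1 - x)) ^ (-(p + q)) = _
      rw [h1, h2, h3, mul_assoc, mul_comm (((1 - x) ^ (p - 1))⁻¹) _, ← div_eq_mul_inv,
        ← Real.rpow_sub hx1]
      congr 1
      ring
    rw [smul_eq_mul, hgval, abs_of_pos (by positivity : (0:ℝ) < (((1 - x) ^ 2)⁻¹))]
    have h6 : (1 - x) ^ (q + 1) = (1 - x) ^ (q - 1) * (1 - x) ^ (2:ℕ) := by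
      rw [← Real.rpow_natCast (1 - x) 2, ← Real.rpow_add hx1]
      congr 1
      push_cast
      ring
    rw [h6]
    have h7 : ((1 - x) ^ (2:ℕ) : ℝ) ≠ 0 := by positivity
    field_simp
  have hmeas : MeasurableSet (Ioo (0:ℝ) 1) := measurableSet_Ioo
  have hint : IntegrableOn g (Ioi 0) := by
    rw [← phi_image]
    rw [integrableOn_image_iff_integrableOn_abs_deriv_smul hmeas (fun x hx => phi_deriv hx) phi_inj]
    exact (beta01_integrable hp hq).congr_fun (fun x hx => (key x hx).symm) hmeas
  refine ⟨hint, ?_⟩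
  have hI : ∫ t in Ioi (0:ℝ), g t = ∫ x in Ioo (0:ℝ) 1, x ^ (p - 1) * (1 - x) ^ (q - 1) := by
    rw [← phi_image,
      integral_image_eq_integral_abs_deriv_smul hmeas (fun x hx => phi_deriv hx) phi_inj]
    exact setIntegral_congr_fun hmeas key
  rw [hI, ← integral_Ioc_eq_integral_Ioo,
    ← intervalIntegral.integral_of_le (by norm_num : (0:ℝ) ≤ 1), beta01 hp hq]

lemma one_sub_rpow_le {x a : ℝ} (hx0 : 0 ≤ x) (hx1 : x ≤ 1) (ha : 0 < a) :
    1 - x ^ a ≤ max a 1 * (1 - x) := by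
  rcases eq_or_lt_of_le hx0 with rfl | hx0'
  · rw [Real.zero_rpow ha.ne']
    have := le_max_right a 1
    nlinarith
  · rcases le_or_gt a 1 with h | h
    · have hle : x ^ (1:ℝ) ≤ x ^ a := Real.rpow_le_rpow_of_exponent_ge hx0' hx1 h
      rw [Real.rpow_one] at hle
      have := le_max_right a 1
      nlinarith
    · have hb := one_add_mul_self_le_rpow_one_add (s := x - 1) (by linarith) h.le
      rw [show (1:ℝ) + (x - 1) = x by ring] at hb
      rw [max_eq_left h.le]
      nlinarith

lemma abstract_id (X Y U P V c s : ℝ) (hs : s ≠ 0) :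
    (1 - Y) * X - c / s * (U * V * P) = ((0 - c * U * V) * P + (1 - Y) * (s * X)) / s := by
  field_simp
  ring

lemma aux_deriv (n m w : ℝ) (hn : 2 < n) (hm0 : 0 < m) (hm2 : m < 2) (hw0 : 0 < w) :
    HasDerivAt (fun w : ℝ => (1 - (w / (1 + w)) ^ (n / 2 - 1)) * w ^ (1 - m / 2) / (1 - m / 2))
      ((1 - (w / (1 + w)) ^ (n / 2 - 1)) * w ^ (-m / 2)
        - (n / 2 - 1) / (1 - m / 2) * (w ^ ((n - m) / 2 - 1) * (1 + w) ^ (-(n / 2)))) w := by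
  have hw1 : (0:ℝ) < 1 + w := by linarith
  have hu0 : (0:ℝ) < w / (1 + w) := div_pos hw0 hw1
  have hd1 : HasDerivAt (fun w : ℝ => w / (1 + w)) (1 / (1 + w) ^ 2) w := by
    have h := (hasDerivAt_id w).div ((hasDerivAt_const w 1).add (hasDerivAt_id w)) hw1.ne'
    convert h using 1
    rfl
    rfl
    rfl
    simp only [Pi.add_apply, id]
    field_simp
    ring
  have hd2 : HasDerivAt (fun w : ℝ => (w / (1 + w)) ^ (n / 2 - 1))
      ((n / 2 - 1) * (w / (1 + w)) ^ (n / 2 - 1 - 1) * (1 / (1 + w) ^ 2)) w :=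
    HasDerivAt.comp (h₂ := fun x : ℝ => x ^ (n / 2 - 1)) w (Real.hasDerivAt_rpow_const (p := n / 2 - 1) (Or.inl hu0.ne')) hd1
  have hd3 : HasDerivAt (fun w : ℝ => w ^ (1 - m / 2)) ((1 - m / 2) * w ^ (1 - m / 2 - 1)) w :=
    Real.hasDerivAt_rpow_const (Or.inl hw0.ne')
  have hd4 := (((hasDerivAt_const w (1:ℝ)).sub hd2).mul hd3).div_const (1 - m / 2)
  convert hd4 using 1
  rfl
  rfl
  rfl
  simp only [Pi.sub_apply]
  have hs : (0:ℝ) < 1 - m / 2 := by linarith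
  have e1 : w ^ (1 - m / 2 - 1) = w ^ (-m / 2) := by
    rw [show (1 - m / 2 - 1 : ℝ) = -m / 2 by ring]
  have e2 : (w / (1 + w)) ^ (n / 2 - 1 - 1) = w ^ (n / 2 - 2) / (1 + w) ^ (n / 2 - 2) := by
    rw [show (n / 2 - 1 - 1 : ℝ) = n / 2 - 2 by ring, Real.div_rpow hw0.le hw1.le]
  have e3 : (1 + w) ^ (-(n / 2)) = ((1 + w) ^ (n / 2 - 2) * (1 + w) ^ (2:ℕ))⁻¹ := by
    rw [← Real.rpow_natCast (1 + w) 2, ← Real.rpow_add hw1, Real.rpow_neg hw1.le]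
    norm_num
  have e4 : w ^ ((n - m) / 2 - 1) = w ^ (n / 2 - 2) * w ^ (1 - m / 2) := by
    rw [← Real.rpow_add hw0]
    congr 1
    ring
  have hp1 : (0:ℝ) < w ^ (n / 2 - 2) := Real.rpow_pos_of_pos hw0 _
  have hp2 : (0:ℝ) < (1 + w) ^ (n / 2 - 2) := Real.rpow_pos_of_pos hw1 _
  have hp3 : (0:ℝ) < ((1 + w) ^ (2:ℕ) : ℝ) := by positivity
  have core : (w / (1 + w)) ^ (n / 2 - 1 - 1) * (1 / (1 + w) ^ 2) * w ^ (1 - m / 2)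
      = w ^ ((n - m) / 2 - 1) * (1 + w) ^ (-(n / 2)) := by
    rw [e2, e4, e3]
    field_simp
  rw [e1, ← core]
  have hsne : (1 - m / 2) ≠ 0 := hs.ne'
  have h1w2 : ((1 + w) ^ 2 : ℝ) ≠ 0 := by positivity
  generalize (w / (1 + w)) ^ (n / 2 - 1 - 1) = U
  generalize (w / (1 + w)) ^ (n / 2 - 1) = Y
  generalize w ^ (-m / 2) = X
  generalize w ^ (1 - m / 2) = P
  generalize (1 : ℝ) / (1 + w) ^ 2 = V
  exact abstract_id X Y U P V _ _ hsne

lemma aux_cont (n m : ℝ) (hn : 2 < n) (hm0 : 0 < m) (hm2 : m < 2) :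
    ContinuousWithinAt
      (fun w : ℝ => (1 - (w / (1 + w)) ^ (n / 2 - 1)) * w ^ (1 - m / 2) / (1 - m / 2))
      (Set.Ici 0) 0 := by
  apply ContinuousAt.continuousWithinAt
  apply ContinuousAt.div_const
  apply ContinuousAt.mul
  · apply ContinuousAt.sub continuousAt_const
    have h1 : ContinuousAt (fun w : ℝ => w / (1 + w)) 0 :=
      (continuousAt_id).div (continuousAt_const.add continuousAt_id) (by norm_num)
    exact h1.rpow_const (Or.inr (by linarith))
  · exact continuousAt_id.rpow_const (Or.inr (by linarith))

lemma aux_tendsto (n m : ℝ) (hn : 2 < n) (hm0 : 0 < m) (hm2 : m < 2) :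
    Filter.Tendsto
      (fun w : ℝ => (1 - (w / (1 + w)) ^ (n / 2 - 1)) * w ^ (1 - m / 2) / (1 - m / 2))
      Filter.atTop (nhds 0) := by
  have hs : (0:ℝ) < 1 - m / 2 := by linarith
  have ha : (0:ℝ) < n / 2 - 1 := by linarith
  set C : ℝ := max (n / 2 - 1) 1 with hC
  have hC0 : (0:ℝ) < C := lt_of_lt_of_le one_pos (le_max_right _ _)
  apply squeeze_zero' (g := fun w : ℝ => C / (1 - m / 2) * w ^ (-(m / 2)))
  · filter_upwards [eventually_ge_atTop (1:ℝ)] with w hw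
    have hw0 : (0:ℝ) < w := by linarith
    have hw1 : (0:ℝ) < 1 + w := by linarith
    have hu0 : (0:ℝ) ≤ w / (1 + w) := by positivity
    have hu1 : w / (1 + w) ≤ 1 := by rw [div_le_one hw1]; linarith
    have h1 : (w / (1 + w)) ^ (n / 2 - 1) ≤ 1 := Real.rpow_le_one hu0 hu1 ha.le
    have h2 : (0:ℝ) ≤ w ^ (1 - m / 2) := Real.rpow_nonneg hw0.le _
    apply div_nonneg _ hs.le
    nlinarith
  · filter_upwards [eventually_ge_atTop (1:ℝ)] with w hw
    have hw0 : (0:ℝ) < w := by linarith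
    have hw1 : (0:ℝ) < 1 + w := by linarith
    have hu0 : (0:ℝ) ≤ w / (1 + w) := by positivity
    have hu1 : w / (1 + w) ≤ 1 := by rw [div_le_one hw1]; linarith
    have hb := one_sub_rpow_le hu0 hu1 ha
    have h1u : (1:ℝ) - w / (1 + w) = 1 / (1 + w) := by field_simp; ring
    rw [h1u, ← hC] at hb
    have hX : (0:ℝ) < w ^ (-(m / 2)) := Real.rpow_pos_of_pos hw0 _
    have hsplit : w ^ (1 - m / 2) = w ^ (-(m / 2)) * w := by
      rw [show (1 - m / 2 : ℝ) = -(m / 2) + 1 by ring, Real.rpow_add_one hw0.ne']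
    rw [div_le_iff₀ hs]
    have heq : C / (1 - m / 2) * w ^ (-(m / 2)) * (1 - m / 2) = C * w ^ (-(m / 2)) := by
      have h2m : (2:ℝ) - m ≠ 0 := by linarith
      field_simp
    rw [heq, hsplit]
    have k1 : (1 - (w / (1 + w)) ^ (n / 2 - 1)) * (w ^ (-(m / 2)) * w)
        ≤ C * (1 / (1 + w)) * (w ^ (-(m / 2)) * w) :=
      mul_le_mul_of_nonneg_right hb (by positivity)
    have k2 : C * (1 / (1 + w)) * (w ^ (-(m / 2)) * w) = C * w ^ (-(m / 2)) * (w / (1 + w)) := by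
      ring
    have k3 : C * w ^ (-(m / 2)) * (w / (1 + w)) ≤ C * w ^ (-(m / 2)) * 1 :=
      mul_le_mul_of_nonneg_left hu1 (by positivity)
    calc (1 - (w / (1 + w)) ^ (n / 2 - 1)) * (w ^ (-(m / 2)) * w)
        ≤ C * (1 / (1 + w)) * (w ^ (-(m / 2)) * w) := k1
      _ = C * w ^ (-(m / 2)) * (w / (1 + w)) := k2
      _ ≤ C * w ^ (-(m / 2)) * 1 := k3
      _ = C * w ^ (-(m / 2)) := by ring
  · have h := (tendsto_rpow_neg_atTop (y := m / 2) (by linarith)).const_mul (C / (1 - m / 2))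
    simpa using h

theorem psi_zero_integral (n m : ℝ) (hn : 2 < n) (hm0 : 0 < m) (hm2 : m < 2) :
    IntegrableOn
        (fun w : ℝ => (1 - (w / (1 + w)) ^ (n / 2 - 1)) * w ^ (-m / 2)) (Set.Ioi 0) ∧
      ∫ w in Set.Ioi (0:ℝ), (1 - (w / (1 + w)) ^ (n / 2 - 1)) * w ^ (-m / 2) =
        Real.Gamma (m / 2) * Real.Gamma ((n - m) / 2) /
          ((1 - m / 2) * Real.Gamma (n / 2 - 1)) := by
  have ha : (0:ℝ) < n / 2 - 1 := by linarith
  have hs : (0:ℝ) < 1 - m / 2 := by linarith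
  have hs0 : (0:ℝ) < m / 2 := by linarith
  set C : ℝ := max (n / 2 - 1) 1 with hC
  have hC0 : (0:ℝ) < C := lt_of_lt_of_le one_pos (le_max_right _ _)
  -- continuity of the integrand on (0, ∞)
  have hcont_f : ContinuousOn
      (fun w : ℝ => (1 - (w / (1 + w)) ^ (n / 2 - 1)) * w ^ (-m / 2)) (Set.Ioi 0) := by
    apply ContinuousOn.mul
    · apply ContinuousOn.sub continuousOn_const
      apply ContinuousOn.rpow_const
      · exact continuousOn_id.div (continuousOn_const.add continuousOn_id)
          (fun x hx => by have : (0:ℝ) < x := hx; positivity)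
      · intro x hx
        left
        have hx0 : (0:ℝ) < x := hx
        positivity
    · exact continuousOn_id.rpow_const (fun x hx => Or.inl (ne_of_gt hx))
  -- integrability of the integrand
  have hf_int : IntegrableOn
      (fun w : ℝ => (1 - (w / (1 + w)) ^ (n / 2 - 1)) * w ^ (-m / 2)) (Set.Ioi 0) := by
    have hunion : Set.Ioc (0:ℝ) 1 ∪ Set.Ioi 1 = Set.Ioi 0 :=
      Set.Ioc_union_Ioi_eq_Ioi (by norm_num)
    rw [← hunion]
    apply IntegrableOn.union
    · -- on (0,1]
      have hg1 : IntegrableOn (fun w : ℝ => w ^ (-m / 2)) (Set.Ioc 0 1) :=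
        (intervalIntegral.intervalIntegrable_rpow' (a := 0) (b := 1) (r := -m / 2)
          (by linarith)).1
      refine Integrable.mono' hg1
        ((hcont_f.mono Set.Ioc_subset_Ioi_self).aestronglyMeasurable measurableSet_Ioc) ?_
      rw [ae_restrict_iff' measurableSet_Ioc]
      refine ae_of_all _ fun w hw => ?_
      have hw0 : (0:ℝ) < w := hw.1
      have hw1 : (0:ℝ) < 1 + w := by linarith
      have hu0 : (0:ℝ) ≤ w / (1 + w) := by positivity
      have hu1 : w / (1 + w) ≤ 1 := by rw [div_le_one hw1]; linarith
      have h1 : (w / (1 + w)) ^ (n / 2 - 1) ≤ 1 := Real.rpow_le_one hu0 hu1 ha.le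
      have h2 : (0:ℝ) ≤ (w / (1 + w)) ^ (n / 2 - 1) := Real.rpow_nonneg hu0 _
      have h3 : (0:ℝ) ≤ w ^ (-m / 2) := Real.rpow_nonneg hw0.le _
      rw [Real.norm_eq_abs, abs_mul, abs_of_nonneg (by linarith), abs_of_nonneg h3]
      nlinarith
    · -- on (1,∞)
      have hg2 : IntegrableOn (fun w : ℝ => C * w ^ (-m / 2 - 1)) (Set.Ioi 1) :=
        (integrableOn_Ioi_rpow_of_lt (by linarith) one_pos).const_mul C
      refine Integrable.mono' hg2
        ((hcont_f.mono (fun x hx => lt_trans (one_pos : (0:ℝ) < 1) hx)).aestronglyMeasurable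
          measurableSet_Ioi) ?_
      rw [ae_restrict_iff' measurableSet_Ioi]
      refine ae_of_all _ fun w hw => ?_
      have hw0 : (0:ℝ) < w := lt_trans (one_pos : (0:ℝ) < 1) hw
      have hw1 : (0:ℝ) < 1 + w := by linarith
      have hu0 : (0:ℝ) ≤ w / (1 + w) := by positivity
      have hu1 : w / (1 + w) ≤ 1 := by rw [div_le_one hw1]; linarith
      have hb := one_sub_rpow_le hu0 hu1 ha
      have h1u : (1:ℝ) - w / (1 + w) = 1 / (1 + w) := by field_simp; ring
      rw [h1u, ← hC] at hb
      have h2 : (0:ℝ) ≤ (w / (1 + w)) ^ (n / 2 - 1) :=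
        Real.rpow_nonneg hu0 _
      have h1 : (w / (1 + w)) ^ (n / 2 - 1) ≤ 1 := Real.rpow_le_one hu0 hu1 ha.le
      have h3 : (0:ℝ) < w ^ (-m / 2) := Real.rpow_pos_of_pos hw0 _
      have hsplit : w ^ (-m / 2 - 1) = w ^ (-m / 2) * w⁻¹ := by
        rw [Real.rpow_sub hw0, Real.rpow_one, div_eq_mul_inv]
      rw [Real.norm_eq_abs, abs_mul, abs_of_nonneg (by linarith), abs_of_nonneg h3.le, hsplit]
      have k1 : (1 - (w / (1 + w)) ^ (n / 2 - 1)) * w ^ (-m / 2)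
          ≤ C * (1 / (1 + w)) * w ^ (-m / 2) :=
        mul_le_mul_of_nonneg_right hb h3.le
      have k2 : C * (1 / (1 + w)) * w ^ (-m / 2) ≤ C * w⁻¹ * w ^ (-m / 2) := by
        have : (1:ℝ) / (1 + w) ≤ w⁻¹ := by
          rw [div_le_iff₀ hw1, inv_mul_eq_div, le_div_iff₀ hw0]
          nlinarith
        have := mul_le_mul_of_nonneg_left this hC0.le
        exact mul_le_mul_of_nonneg_right this h3.le
      calc (1 - (w / (1 + w)) ^ (n / 2 - 1)) * w ^ (-m / 2)
          ≤ C * (1 / (1 + w)) * w ^ (-m / 2) := k1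
        _ ≤ C * w⁻¹ * w ^ (-m / 2) := k2
        _ = C * (w ^ (-m / 2) * w⁻¹) := by ring
  refine ⟨hf_int, ?_⟩
  -- the beta integral
  have hb := betaIoi (p := (n - m) / 2) (q := m / 2) (by linarith) hs0
  rw [show ((n - m) / 2 + m / 2 : ℝ) = n / 2 by ring] at hb
  have hg_int : IntegrableOn
      (fun w : ℝ => (n / 2 - 1) / (1 - m / 2) * (w ^ ((n - m) / 2 - 1) * (1 + w) ^ (-(n / 2))))
      (Set.Ioi 0) := hb.1.const_mul _
  -- FTC
  have hkey : ∫ w in Set.Ioi (0:ℝ),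
      ((1 - (w / (1 + w)) ^ (n / 2 - 1)) * w ^ (-m / 2)
        - (n / 2 - 1) / (1 - m / 2) * (w ^ ((n - m) / 2 - 1) * (1 + w) ^ (-(n / 2))))
      = 0 - (1 - ((0:ℝ) / (1 + 0)) ^ (n / 2 - 1)) * (0:ℝ) ^ (1 - m / 2) / (1 - m / 2) := by
    exact integral_Ioi_of_hasDerivAt_of_tendsto (aux_cont n m hn hm0 hm2)
      (fun w hw => aux_deriv n m w hn hm0 hm2 hw) (hf_int.sub hg_int) (aux_tendsto n m hn hm0 hm2)
  rw [integral_sub hf_int hg_int] at hkey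
  have hF0 : (1 - ((0:ℝ) / (1 + 0)) ^ (n / 2 - 1)) * (0:ℝ) ^ (1 - m / 2) / (1 - m / 2) = 0 := by
    rw [Real.zero_rpow (by linarith : (1 - m / 2 : ℝ) ≠ 0)]
    ring
  rw [hF0, sub_zero] at hkey
  have hfg : ∫ w in Set.Ioi (0:ℝ), (1 - (w / (1 + w)) ^ (n / 2 - 1)) * w ^ (-m / 2)
      = ∫ w in Set.Ioi (0:ℝ),
        (n / 2 - 1) / (1 - m / 2) * (w ^ ((n - m) / 2 - 1) * (1 + w) ^ (-(n / 2))) := by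
    linarith [hkey]
  rw [hfg, integral_const_mul, hb.2]
  have hGa : Real.Gamma (n / 2) = (n / 2 - 1) * Real.Gamma (n / 2 - 1) := by
    rw [show (n / 2 : ℝ) = (n / 2 - 1) + 1 by ring, Real.Gamma_add_one ha.ne']
    norm_num
  rw [hGa]
  have hGpos : (0:ℝ) < Real.Gamma (n / 2 - 1) := Real.Gamma_pos_of_pos ha
  have h3 : Real.Gamma (n / 2 - 1) ≠ 0 := hGpos.ne'
  generalize Real.Gamma ((n - m) / 2) = G1 at *
  generalize Real.Gamma (m / 2) = G2 at *
  generalize Real.Gamma (n / 2 - 1) = G3 at *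
  have h2m : (2:ℝ) - m ≠ 0 := by linarith
  have hn2 : (n:ℝ) - 2 ≠ 0 := by linarith
  field_simp
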